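/- arXiv:math-ph/0501005 — 2 statements merged into one kernel-verified Lean document; each statement's English description precedes it below -/
import Mathlib

section
/- Let A, B ∈ SL(2,ℝ). For M ∈ {A, B, AB, BA}, suppose (u⁺_M, u⁻_M, v⁺_M, v⁻_M) is a singular frame for M, i.e., u⁺_M ⟂ u⁻_M and v⁺_M ⟂ v⁻_M are unit vectors in ℝ² with M u⁺_M = ‖M‖ v⁺_M and M u⁻_M = ‖M‖^{−1} v⁻_M. Then: |B u⁻_{AB} ∧ u⁻_A| ≤ ‖A‖^{−2}‖B‖, |u⁻_{BA} ∧ u⁻_A| ≤ ‖A‖^{−2}‖B‖², |v⁺_{AB} ∧ v⁺_A| ≤ ‖A‖^{−2}‖B‖², and |v⁺_{BA} ∧ B v⁺_A| ≤ ‖A‖^{−2}‖B‖. -/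
open MeasureTheory Filter

noncomputable section

/-- `e(x) = exp(2πix)`. -/
def eF (x : ℝ) : ℂ := Complex.exp (2 * Real.pi * Complex.I * (x : ℂ))

/-- The annulus `𝒜_ρ = {z : 1 - ρ < |z| < 1 + ρ}`. -/
def annulus (ρ : ℝ) : Set ℂ := {z : ℂ | 1 - ρ < ‖z‖ ∧ ‖z‖ < 1 + ρ}

/-- Operator norm (w.r.t. the Euclidean norm on `ℝ²`) of a 2×2 real matrix. -/
def opNorm (M : Matrix (Fin 2) (Fin 2) ℝ) : ℝ :=
  ‖(Matrix.toEuclideanCLM (𝕜 := ℝ) (n := Fin 2)) M‖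

/-- One-step transfer matrix `A(x,E)`. -/
def Amat (V : ℝ → ℝ) (x E : ℝ) : Matrix (Fin 2) (Fin 2) ℝ := !![V x - E, -1; 1, 0]

/-- Monodromy matrix `M_N(x, ω, E) = ∏_{j=N}^{1} A(x + jω, E)`. -/
def Mon (V : ℝ → ℝ) : ℕ → ℝ → ℝ → ℝ → Matrix (Fin 2) (Fin 2) ℝ
  | 0, _, _, _ => 1
  | N + 1, x, ω, E => Amat V (x + ((N + 1 : ℕ) : ℝ) * ω) E * Mon V N x ω E

/-- Finite-volume Lyapunov exponent `L_N(ω, E)`. -/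
def LN (V : ℝ → ℝ) (N : ℕ) (ω E : ℝ) : ℝ :=
  (1 / (N : ℝ)) * ∫ x in (0:ℝ)..1, Real.log (opNorm (Mon V N x ω E))

/-- Lyapunov exponent `L(ω, E) = inf_N L_N(ω, E)`. -/
def Lyap (V : ℝ → ℝ) (ω E : ℝ) : ℝ := ⨅ N : ℕ, LN V (N + 1) ω E

/-- Distance to the nearest integer. -/
def distInt (x : ℝ) : ℝ := ⨅ k : ℤ, |x - (k : ℝ)|

/-- The Diophantine class `𝕋_{c,a}`. -/
def Tca (c a : ℝ) : Set ℝ :=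
  {ω ∈ Set.Icc (0:ℝ) 1 | ∀ n : ℕ, 2 ≤ n →
    c / ((n : ℝ) * Real.log n ^ a) ≤ distInt ((n : ℝ) * ω)}

/-- Dirichlet Schrödinger operator `H_N(x, ω)` on `[1, N]`. -/
def Hmat (V : ℝ → ℝ) (N : ℕ) (x ω : ℝ) : Matrix (Fin N) (Fin N) ℝ :=
  Matrix.of fun i j : Fin N =>
    if i = j then V (x + (((i : ℕ) : ℝ) + 1) * ω)
    else if (i : ℕ) + 1 = (j : ℕ) ∨ (j : ℕ) + 1 = (i : ℕ) then -1 else 0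

open scoped Classical in
/-- Number of eigenvalues (counted with multiplicity, via the characteristic
polynomial) of a real matrix lying in a set `s ⊆ ℝ`. -/
def specCount {n : ℕ} (M : Matrix (Fin n) (Fin n) ℝ) (s : Set ℝ) : ℕ :=
  Multiset.card (Multiset.filter (fun r => r ∈ s) M.charpoly.roots)

/-- Dirichlet determinant on `[a, b]` with complexified phase `z`. -/
def fInt (F : ℂ → ℂ) (a b : ℤ) (z : ℂ) (ω E : ℝ) : ℂ :=
  Matrix.det (Matrix.of fun i j : Fin ((b - a).toNat + 1) =>
    if i = j then F (z * eF (((a : ℝ) + (i : ℕ)) * ω)) - (E : ℂ)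
    else if (i : ℕ) + 1 = (j : ℕ) ∨ (j : ℕ) + 1 = (i : ℕ) then -1 else 0)

/-- Dirichlet determinant `f_N(z, ω, E)` with complexified phase `z`. -/
def fN (F : ℂ → ℂ) (N : ℕ) (z : ℂ) (ω E : ℝ) : ℂ :=
  Matrix.det (Matrix.of fun i j : Fin N =>
    if i = j then F (z * eF ((((i : ℕ) : ℝ) + 1) * ω)) - (E : ℂ)
    else if (i : ℕ) + 1 = (j : ℕ) ∨ (j : ℕ) + 1 = (i : ℕ) then -1 else 0)

-- Order of vanishing of `f` at `z` (as a natural number; junk value `0` at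
-- points where `f` is not analytic or vanishes identically).
open scoped Classical in
def zmult (f : ℂ → ℂ) (z : ℂ) : ℕ :=
  if h : AnalyticAt ℂ f z then (analyticOrderAt f z).toNat else 0

/-- Number of zeros of `f` in `s`, counted with multiplicity. -/
def nuCount (f : ℂ → ℂ) (s : Set ℂ) : ℕ := ∑ᶠ z ∈ s, zmult f z

/-- The double average `J(u, z₀, r₁, r₂)`. -/
def Jav (u : ℂ → ℝ) (z0 : ℂ) (r1 r2 : ℝ) : ℝ :=
  (1 / (Real.pi * r1 ^ 2)) *
    ∫ z in Metric.ball z0 r1,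
      ((1 / (Real.pi * r2 ^ 2)) * ∫ ζ in Metric.ball z r2, (u ζ - u z))

/-- The impurity matrix `D`. -/
def Dimp : Matrix (Fin 2) (Fin 2) ℝ := !![-1, 0; 0, 0]

/-- Monodromy with impurities at sites `k 1 < k 2 < ⋯ < k t`. -/
def MonImp (V : ℝ → ℝ) (n t : ℕ) (k : ℕ → ℕ) (x ω E : ℝ) : Matrix (Fin 2) (Fin 2) ℝ :=
  if t = 0 then Mon V n x ω E
  else
    Mon V (n - k t) (x + (k t : ℝ) * ω) ω E * Dimp *
      ((List.range (t - 1)).map (fun j =>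
        Mon V (k (t - j) - k (t - 1 - j) - 1) (x + (k (t - 1 - j) : ℝ) * ω) ω E * Dimp)).prod *
      Mon V (k 1 - 1) x ω E

/-- `L_n^{(k₁,…,k_t)}(ω, E)`. -/
def LNImp (V : ℝ → ℝ) (n t : ℕ) (k : ℕ → ℕ) (ω E : ℝ) : ℝ :=
  (1 / (n : ℝ)) * ∫ x in (0:ℝ)..1, Real.log (opNorm (MonImp V n t k x ω E))

/-- Dirichlet Schrödinger operator `H_{[-N,N]}(x, ω)`. -/
def HmatSym (V : ℝ → ℝ) (N : ℕ) (x ω : ℝ) : Matrix (Fin (2 * N + 1)) (Fin (2 * N + 1)) ℝ :=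
  Matrix.of fun i j : Fin (2 * N + 1) =>
    if i = j then V (x + (((i : ℕ) : ℝ) - (N : ℝ)) * ω)
    else if (i : ℕ) + 1 = (j : ℕ) ∨ (j : ℕ) + 1 = (i : ℕ) then -1 else 0

def wedge (u v : Fin 2 → ℝ) : ℝ := u 0 * v 1 - u 1 * v 0

def dot2 (u v : Fin 2 → ℝ) : ℝ := u 0 * v 0 + u 1 * v 1

def norm2 (u : Fin 2 → ℝ) : ℝ := Real.sqrt (u 0 ^ 2 + u 1 ^ 2)

/-- `(u⁺, u⁻, v⁺, v⁻)` is a singular frame for `M`. -/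
def IsSingularFrame (M : Matrix (Fin 2) (Fin 2) ℝ) (up um vp vm : Fin 2 → ℝ) : Prop :=
  norm2 up = 1 ∧ norm2 um = 1 ∧ norm2 vp = 1 ∧ norm2 vm = 1 ∧
  dot2 up um = 0 ∧ dot2 vp vm = 0 ∧
  M.mulVec up = opNorm M • vp ∧ M.mulVec um = (opNorm M)⁻¹ • vm


private lemma norm2_nonneg' (u : Fin 2 → ℝ) : 0 ≤ norm2 u := Real.sqrt_nonneg _

private lemma norm2_sq' (u : Fin 2 → ℝ) : norm2 u ^ 2 = u 0 ^ 2 + u 1 ^ 2 :=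
  Real.sq_sqrt (by positivity)

private lemma norm2_smul' (c : ℝ) (u : Fin 2 → ℝ) : norm2 (c • u) = |c| * norm2 u := by
  unfold norm2
  rw [Pi.smul_apply, Pi.smul_apply, smul_eq_mul, smul_eq_mul]
  rw [show (c * u 0) ^ 2 + (c * u 1) ^ 2 = c ^ 2 * (u 0 ^ 2 + u 1 ^ 2) by ring,
    Real.sqrt_mul (sq_nonneg c), Real.sqrt_sq_eq_abs]

private lemma wedge_smul_left' (c : ℝ) (u v : Fin 2 → ℝ) :
    wedge (c • u) v = c * wedge u v := by
  simp [wedge]; ring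

private lemma wedge_smul_right' (c : ℝ) (u v : Fin 2 → ℝ) :
    wedge u (c • v) = c * wedge u v := by
  simp [wedge]; ring

private lemma wedge_mulVec' (M : Matrix (Fin 2) (Fin 2) ℝ) (u v : Fin 2 → ℝ) :
    wedge (M.mulVec u) (M.mulVec v) = M.det * wedge u v := by
  simp [wedge, Matrix.mulVec, dotProduct, Fin.sum_univ_two, Matrix.det_fin_two]
  ring

private lemma abs_wedge_le' (u v : Fin 2 → ℝ) : |wedge u v| ≤ norm2 u * norm2 v := by
  have hu := norm2_sq' u
  have hv := norm2_sq' v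
  have h0 := norm2_nonneg' u
  have h1 := norm2_nonneg' v
  have key : wedge u v ^ 2 ≤ (norm2 u * norm2 v) ^ 2 := by
    rw [mul_pow, hu, hv]
    unfold wedge
    nlinarith [sq_nonneg (u 0 * v 0 + u 1 * v 1)]
  nlinarith [abs_nonneg (wedge u v), sq_abs (wedge u v), mul_nonneg h0 h1]

private lemma euclid_norm' (u : Fin 2 → ℝ) :
    ‖(WithLp.equiv 2 (Fin 2 → ℝ)).symm u‖ = norm2 u := by
  rw [EuclideanSpace.norm_eq]
  simp [norm2, Fin.sum_univ_two, Real.norm_eq_abs, sq_abs]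

private lemma opNorm_nonneg' (M : Matrix (Fin 2) (Fin 2) ℝ) : 0 ≤ opNorm M :=
  norm_nonneg _

private lemma norm2_mulVec_le' (M : Matrix (Fin 2) (Fin 2) ℝ) (w : Fin 2 → ℝ) :
    norm2 (M.mulVec w) ≤ opNorm M * norm2 w := by
  have h := ((Matrix.toEuclideanCLM (𝕜 := ℝ) (n := Fin 2)) M).le_opNorm
    ((WithLp.equiv 2 (Fin 2 → ℝ)).symm w)
  rw [← euclid_norm', ← euclid_norm']
  exact h

private lemma norm2_le_op_mul' (M : Matrix (Fin 2) (Fin 2) ℝ) (hM : M.det = 1)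
    (w : Fin 2 → ℝ) : norm2 w ≤ opNorm M * norm2 (M.mulVec w) := by
  set r : Fin 2 → ℝ := ![-(w 1), w 0] with hrdef
  have hr : norm2 r = norm2 w := by
    unfold norm2
    rw [hrdef]
    norm_num
    ring_nf
  have hwr : wedge w r = norm2 w ^ 2 := by
    rw [norm2_sq', hrdef]
    simp [wedge]
    ring
  have h := abs_wedge_le' (M.mulVec w) (M.mulVec r)
  rw [wedge_mulVec', hM, one_mul, hwr, abs_of_nonneg (by positivity)] at h
  have h2 := norm2_mulVec_le' M r
  rw [hr] at h2
  have hn := norm2_nonneg' w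
  have hm := norm2_nonneg' (M.mulVec w)
  have hop := opNorm_nonneg' M
  nlinarith [norm2_sq' w, mul_nonneg hop hm]

private lemma frame_one_le' (M : Matrix (Fin 2) (Fin 2) ℝ) (hM : M.det = 1)
    (up um vp vm : Fin 2 → ℝ) (hF : IsSingularFrame M up um vp vm) :
    1 ≤ opNorm M := by
  obtain ⟨h1, h2, _, _, h5, _, _, _⟩ := hF
  have hu : up 0 ^ 2 + up 1 ^ 2 = 1 := by
    have := norm2_sq' up; rw [h1] at this; linarith
  have hv : um 0 ^ 2 + um 1 ^ 2 = 1 := by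
    have := norm2_sq' um; rw [h2] at this; linarith
  have hd : up 0 * um 0 + up 1 * um 1 = 0 := h5
  have hw : wedge up um ^ 2 = 1 := by
    unfold wedge; nlinarith
  have h := abs_wedge_le' (M.mulVec up) (M.mulVec um)
  rw [wedge_mulVec', hM, one_mul] at h
  have hb1 := norm2_mulVec_le' M up
  have hb2 := norm2_mulVec_le' M um
  rw [h1] at hb1; rw [h2] at hb2
  have hop := opNorm_nonneg' M
  have habs : |wedge up um| = 1 := by
    nlinarith [abs_nonneg (wedge up um), sq_abs (wedge up um)]
  nlinarith [norm2_nonneg' (M.mulVec up), norm2_nonneg' (M.mulVec um)]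

private lemma aux_bound' (a b m c X : ℝ) (ha : 0 < a) (hm : 0 < m) (h : a ≤ m * b)
    (hX : |X| ≤ c) : |m⁻¹ * (a⁻¹ * X)| ≤ b * c / a ^ 2 := by
  have hc : 0 ≤ c := le_trans (abs_nonneg X) hX
  have hb : 0 < b := by nlinarith
  rw [abs_mul, abs_mul, abs_inv, abs_inv, abs_of_pos ha, abs_of_pos hm]
  rw [div_eq_mul_inv]
  have step1 : m⁻¹ * (a⁻¹ * |X|) ≤ m⁻¹ * (a⁻¹ * c) := by
    apply mul_le_mul_of_nonneg_left _ (by positivity)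
    exact mul_le_mul_of_nonneg_left hX (by positivity)
  refine le_trans step1 ?_
  rw [← sub_nonneg]
  have key : b * c * (a ^ 2)⁻¹ - m⁻¹ * (a⁻¹ * c) = c * (m * b - a) * (m * a ^ 2)⁻¹ := by
    field_simp
  rw [key]
  have : 0 ≤ m * b - a := by linarith
  positivity

theorem statement_7
    (A B : Matrix (Fin 2) (Fin 2) ℝ) (hA : A.det = 1) (hB : B.det = 1)
    (upA umA vpA vmA upB umB vpB vmB : Fin 2 → ℝ)
    (upAB umAB vpAB vmAB upBA umBA vpBA vmBA : Fin 2 → ℝ)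
    (hFA : IsSingularFrame A upA umA vpA vmA)
    (hFB : IsSingularFrame B upB umB vpB vmB)
    (hFAB : IsSingularFrame (A * B) upAB umAB vpAB vmAB)
    (hFBA : IsSingularFrame (B * A) upBA umBA vpBA vmBA) :
    |wedge (B.mulVec umAB) umA| ≤ opNorm B / opNorm A ^ 2 ∧
    |wedge umBA umA| ≤ opNorm B ^ 2 / opNorm A ^ 2 ∧
    |wedge vpAB vpA| ≤ opNorm B ^ 2 / opNorm A ^ 2 ∧
    |wedge vpBA (B.mulVec vpA)| ≤ opNorm B / opNorm A ^ 2 := by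
  obtain ⟨hA1, hA2, hA3, hA4, hA5, hA6, hA7, hA8⟩ := hFA
  obtain ⟨hAB1, hAB2, hAB3, hAB4, hAB5, hAB6, hAB7, hAB8⟩ := hFAB
  obtain ⟨hBA1, hBA2, hBA3, hBA4, hBA5, hBA6, hBA7, hBA8⟩ := hFBA
  have hABdet : (A * B).det = 1 := by rw [Matrix.det_mul, hA, hB]; ring
  have hBAdet : (B * A).det = 1 := by rw [Matrix.det_mul, hA, hB]; ring
  have ha : 0 < opNorm A := lt_of_lt_of_le one_pos
    (frame_one_le' A hA upA umA vpA vmA ⟨hA1, hA2, hA3, hA4, hA5, hA6, hA7, hA8⟩)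
  have hab : 0 < opNorm (A * B) := lt_of_lt_of_le one_pos
    (frame_one_le' (A * B) hABdet upAB umAB vpAB vmAB
      ⟨hAB1, hAB2, hAB3, hAB4, hAB5, hAB6, hAB7, hAB8⟩)
  have hba : 0 < opNorm (B * A) := lt_of_lt_of_le one_pos
    (frame_one_le' (B * A) hBAdet upBA umBA vpBA vmBA
      ⟨hBA1, hBA2, hBA3, hBA4, hBA5, hBA6, hBA7, hBA8⟩)
  have hb0 : 0 ≤ opNorm B := opNorm_nonneg' B
  -- opNorm A ≤ opNorm (B*A) * opNorm B
  have hkeyBA : opNorm A ≤ opNorm (B * A) * opNorm B := by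
    have h1 : norm2 (A.mulVec upA) = opNorm A := by
      rw [hA7, norm2_smul', hA3, abs_of_pos ha, mul_one]
    have h2 := norm2_le_op_mul' B hB (A.mulVec upA)
    rw [h1, Matrix.mulVec_mulVec] at h2
    have h3 := norm2_mulVec_le' (B * A) upA
    rw [hA1, mul_one] at h3
    calc opNorm A ≤ opNorm B * norm2 ((B * A).mulVec upA) := h2
      _ ≤ opNorm B * opNorm (B * A) := by
          exact mul_le_mul_of_nonneg_left h3 hb0
      _ = opNorm (B * A) * opNorm B := by ring
  -- opNorm A ≤ opNorm (A*B) * opNorm B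
  have hkeyAB : opNorm A ≤ opNorm (A * B) * opNorm B := by
    have hBu : IsUnit B.det := by rw [hB]; exact isUnit_one
    set z : Fin 2 → ℝ := B⁻¹.mulVec upA with hz
    have hBz : B.mulVec z = upA := by
      rw [hz, Matrix.mulVec_mulVec, Matrix.mul_nonsing_inv B hBu, Matrix.one_mulVec]
    have h1 : norm2 (A.mulVec upA) = opNorm A := by
      rw [hA7, norm2_smul', hA3, abs_of_pos ha, mul_one]
    have h2 : norm2 z ≤ opNorm B := by
      have := norm2_le_op_mul' B hB z
      rw [hBz, hA1, mul_one] at this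
      exact this
    have h3 : opNorm A ≤ opNorm (A * B) * norm2 z := by
      rw [← h1, ← hBz, Matrix.mulVec_mulVec]
      exact norm2_mulVec_le' (A * B) z
    calc opNorm A ≤ opNorm (A * B) * norm2 z := h3
      _ ≤ opNorm (A * B) * opNorm B := mul_le_mul_of_nonneg_left h2 (le_of_lt hab)
  refine ⟨?_, ?_, ?_, ?_⟩
  · -- |wedge (B umAB) umA| ≤ b / a^2
    have e1 : wedge (B.mulVec umAB) umA =
        (opNorm (A * B))⁻¹ * ((opNorm A)⁻¹ * wedge vmAB vmA) := by
      have hd := wedge_mulVec' A (B.mulVec umAB) umA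
      rw [hA, one_mul] at hd
      rw [← hd, Matrix.mulVec_mulVec, hAB8, hA8, wedge_smul_left', wedge_smul_right']
    have hX : |wedge vmAB vmA| ≤ 1 := by
      have := abs_wedge_le' vmAB vmA
      rw [hAB4, hA4, mul_one] at this
      exact this
    have := aux_bound' (opNorm A) (opNorm B) (opNorm (A * B)) 1 (wedge vmAB vmA)
      ha hab hkeyAB hX
    rw [mul_one] at this
    rw [e1]
    exact this
  · -- |wedge umBA umA| ≤ b^2 / a^2
    have e2 : wedge umBA umA =
        (opNorm (B * A))⁻¹ * ((opNorm A)⁻¹ * wedge vmBA (B.mulVec vmA)) := by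
      have hd := wedge_mulVec' (B * A) umBA umA
      rw [hBAdet, one_mul] at hd
      rw [← hd, hBA8]
      rw [show (B * A).mulVec umA = B.mulVec (A.mulVec umA) from
        (Matrix.mulVec_mulVec _ _ _).symm]
      rw [hA8, Matrix.mulVec_smul, wedge_smul_left', wedge_smul_right']
    have hX : |wedge vmBA (B.mulVec vmA)| ≤ opNorm B := by
      have h1 := abs_wedge_le' vmBA (B.mulVec vmA)
      have h2 := norm2_mulVec_le' B vmA
      rw [hA4, mul_one] at h2
      rw [hBA4, one_mul] at h1
      exact le_trans h1 h2
    have := aux_bound' (opNorm A) (opNorm B) (opNorm (B * A)) (opNorm B)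
      (wedge vmBA (B.mulVec vmA)) ha hba hkeyBA hX
    rw [e2, ← pow_two (opNorm B)] at *
    exact this
  · -- |wedge vpAB vpA| ≤ b^2 / a^2
    have e3 : wedge vpAB vpA =
        (opNorm (A * B))⁻¹ * ((opNorm A)⁻¹ * wedge (B.mulVec upAB) upA) := by
      have hv1 : vpAB = (opNorm (A * B))⁻¹ • (A * B).mulVec upAB := by
        rw [hAB7, inv_smul_smul₀ (ne_of_gt hab)]
      have hv2 : vpA = (opNorm A)⁻¹ • A.mulVec upA := by
        rw [hA7, inv_smul_smul₀ (ne_of_gt ha)]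
      rw [hv1, hv2, wedge_smul_left', wedge_smul_right']
      rw [show (A * B).mulVec upAB = A.mulVec (B.mulVec upAB) from
        (Matrix.mulVec_mulVec _ _ _).symm]
      rw [wedge_mulVec', hA]
      ring
    have hX : |wedge (B.mulVec upAB) upA| ≤ opNorm B := by
      have h1 := abs_wedge_le' (B.mulVec upAB) upA
      have h2 := norm2_mulVec_le' B upAB
      rw [hAB1, mul_one] at h2
      rw [hA1, mul_one] at h1
      exact le_trans h1 h2
    have := aux_bound' (opNorm A) (opNorm B) (opNorm (A * B)) (opNorm B)
      (wedge (B.mulVec upAB) upA) ha hab hkeyAB hX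
    rw [e3, ← pow_two (opNorm B)] at *
    exact this
  · -- |wedge vpBA (B vpA)| ≤ b / a^2
    have e4 : wedge vpBA (B.mulVec vpA) =
        (opNorm (B * A))⁻¹ * ((opNorm A)⁻¹ * wedge upBA upA) := by
      have hv1 : vpBA = (opNorm (B * A))⁻¹ • (B * A).mulVec upBA := by
        rw [hBA7, inv_smul_smul₀ (ne_of_gt hba)]
      have hv2 : vpA = (opNorm A)⁻¹ • A.mulVec upA := by
        rw [hA7, inv_smul_smul₀ (ne_of_gt ha)]
      rw [hv1, hv2, Matrix.mulVec_smul, wedge_smul_left', wedge_smul_right']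
      rw [Matrix.mulVec_mulVec, wedge_mulVec', hBAdet]
      ring
    have hX : |wedge upBA upA| ≤ 1 := by
      have := abs_wedge_le' upBA upA
      rw [hBA1, hA1, mul_one] at this
      exact this
    have := aux_bound' (opNorm A) (opNorm B) (opNorm (B * A)) 1 (wedge upBA upA)
      ha hba hkeyBA hX
    rw [mul_one] at this
    rw [e4]
    exact this

end
end

section
/- Let r > 0, η > 0, and let φ be analytic on the disk D(0, r) ⊂ ℂ. Then the two-dimensional Lebesgue measure of the image set { w ∈ ℂ : w = φ(z) for some z ∈ D(0, r) with |φ′(z)| < η } is at most π·r²·η². -/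
open MeasureTheory Filter

noncomputable section

lemma my_det_aux (c : ℂ) (L : ℂ →L[ℝ] ℂ) (hL : ∀ z, L z = z * c) :
    L.det = Complex.normSq c := by
  have hM : LinearMap.toMatrix Complex.basisOneI Complex.basisOneI (L : ℂ →ₗ[ℝ] ℂ)
      = !![c.re, -c.im; c.im, c.re] := by
    ext i j
    fin_cases i <;> fin_cases j <;>
      simp [LinearMap.toMatrix_apply, hL, Complex.coe_basisOneI, Complex.coe_basisOneI_repr,
        Complex.mul_re, Complex.mul_im]
  have : LinearMap.det (L : ℂ →ₗ[ℝ] ℂ) = Complex.normSq c := by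
    rw [← LinearMap.det_toMatrix Complex.basisOneI, hM, Matrix.det_fin_two_of,
      Complex.normSq_apply]
    ring
  exact this

theorem statement_18
    (r η : ℝ) (hr : 0 < r) (hη : 0 < η)
    (φ : ℂ → ℂ) (hφ : AnalyticOnNhd ℂ φ (Metric.ball 0 r)) :
    volume (φ '' {z ∈ Metric.ball (0:ℂ) r | ‖deriv φ z‖ < η}) ≤
      ENNReal.ofReal (Real.pi * r ^ 2 * η ^ 2) := by
  set s : Set ℂ := {z ∈ Metric.ball (0:ℂ) r | ‖deriv φ z‖ < η} with hs_def
  have hsub : s ⊆ Metric.ball (0:ℂ) r := fun z hz => hz.1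
  have hseq : s = Metric.ball (0:ℂ) r ∩ (deriv φ) ⁻¹' (Metric.ball (0:ℂ) η) := by
    ext z
    simp [hs_def, Metric.mem_ball, Complex.dist_eq, Complex.norm_def, and_comm]
  have hcont : ContinuousOn (deriv φ) (Metric.ball (0:ℂ) r) :=
    (hφ.deriv).continuousOn
  have hopen : IsOpen s := by
    rw [hseq]
    exact hcont.isOpen_inter_preimage Metric.isOpen_ball Metric.isOpen_ball
  have hmeas : MeasurableSet s := hopen.measurableSet
  have hder : ∀ z ∈ s, HasFDerivWithinAt φ (fderiv ℝ φ z) s z := fun z hz =>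
    (((hφ z hz.1).differentiableAt.restrictScalars ℝ).hasFDerivAt).hasFDerivWithinAt
  have hdet : ∀ z ∈ s, (fderiv ℝ φ z).det = Complex.normSq (deriv φ z) := by
    intro z hz
    have h : HasDerivAt φ (deriv φ z) z := (hφ z hz.1).differentiableAt.hasDerivAt
    have hf : fderiv ℝ φ z = ContinuousLinearMap.restrictScalars ℝ
        (ContinuousLinearMap.smulRight (1 : ℂ →L[ℂ] ℂ) (deriv φ z)) :=
      (h.hasFDerivAt.restrictScalars ℝ).fderiv
    apply my_det_aux
    intro w
    simp [hf, smul_eq_mul]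
  calc volume (φ '' s)
      ≤ ∫⁻ z in s, ENNReal.ofReal |(fderiv ℝ φ z).det| :=
        addHaar_image_le_lintegral_abs_det_fderiv volume hmeas hder
    _ ≤ ∫⁻ _ in s, ENNReal.ofReal (η ^ 2) := by
        apply setLIntegral_mono measurable_const
        intro z hz
        apply ENNReal.ofReal_le_ofReal
        rw [hdet z hz, abs_of_nonneg (Complex.normSq_nonneg _), ← Complex.sq_norm]
        exact pow_le_pow_left₀ (norm_nonneg _) hz.2.le 2
    _ = ENNReal.ofReal (η ^ 2) * volume s := setLIntegral_const s _
    _ ≤ ENNReal.ofReal (η ^ 2) * volume (Metric.ball (0:ℂ) r) :=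
        mul_le_mul_right (measure_mono hsub) _
    _ ≤ ENNReal.ofReal (Real.pi * r ^ 2 * η ^ 2) := by
        rw [Complex.volume_ball, ← ENNReal.ofReal_coe_nnreal, ← ENNReal.ofReal_pow hr.le,
          ← ENNReal.ofReal_mul (by positivity), ← ENNReal.ofReal_mul (by positivity)]
        apply ENNReal.ofReal_le_ofReal
        rw [NNReal.coe_real_pi]
        ring_nf
        exact le_rfl

end
end
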